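/- Smoothing lemma: Fix an integer k > 1 and let S_k f(x) denote the average of f over the lattice ball B(x,k) ∩ ℤ^d. For the rotor aggregation odometer u = u_n and any x with B(x,k) ∩ ℤ^d ⊆ R_n \ {0}, one has (1/2d)ΔS_k u(x) = 1 + O(1/k), where the implied constant depends only on d. -/

import Mathlib

/-- The lattice `ℤᵈ`. -/
abbrev Vd (d : ℕ) := Fin d → ℤ

/-- The neighbor of `x` in direction `j = (i, b)`: `x + eᵢ` if `b`, else `x − eᵢ`. -/
def nbr {d : ℕ} (x : Vd d) (j : Fin d × Bool) : Vd d :=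
  if j.2 then x + Pi.single j.1 1 else x - Pi.single j.1 1

/-- The graph Laplacian on `ℤᵈ`: `Δf(x) = Σ_{y ∼ x} (f(y) − f(x))`. -/
def lapd {d : ℕ} (f : Vd d → ℝ) (x : Vd d) : ℝ :=
  ∑ j : Fin d × Bool, (f (nbr x j) - f x)

/-- A configuration during rotor aggregation: the rotor directions (as indices into each
vertex's periodic mechanism), the set of occupied sites, and the current walker (if any). -/
structure RConf (d : ℕ) where
  rotors : Vd d → ZMod (2 * d)
  occ : Finset (Vd d)
  walker : Option (Vd d)

/-- One step of rotor aggregation with mechanism `mech`: launch a new particle at the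
origin, settle the walker at an unoccupied site, or advance the rotor at the walker's
(occupied) site and move the walker to the neighbor it now points to. -/
inductive RStep {d : ℕ} (mech : Vd d → ZMod (2 * d) → Fin d × Bool) :
    RConf d → RConf d → Prop
  | launch (c : RConf d) (h : c.walker = none) :
      RStep mech c ⟨c.rotors, c.occ, some 0⟩
  | settle (c : RConf d) (p : Vd d) (h : c.walker = some p) (hp : p ∉ c.occ) :
      RStep mech c ⟨c.rotors, insert p c.occ, none⟩
  | move (c : RConf d) (p : Vd d) (h : c.walker = some p) (hp : p ∈ c.occ) :
      RStep mech c ⟨Function.update c.rotors p (c.rotors p + 1), c.occ,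
        some (nbr p (mech p (c.rotors p + 1)))⟩

/-- A complete execution of rotor aggregation of `n` particles started at the origin of
`ℤᵈ`, with rotor mechanism `mech` and initial rotor configuration `r₀`. -/
structure RotorExec (d n : ℕ) (mech : Vd d → ZMod (2 * d) → Fin d × Bool)
    (r₀ : Vd d → ZMod (2 * d)) where
  T : ℕ
  conf : ℕ → RConf d
  init : conf 0 = ⟨r₀, ∅, none⟩
  step : ∀ i < T, RStep mech (conf i) (conf (i + 1))
  walker_final : (conf T).walker = none
  card_final : (conf T).occ.card = n

/-- A rotor mechanism is simple if each of the `2d` neighbors occurs exactly once per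
period. -/
def SimpleMech {d : ℕ} (mech : Vd d → ZMod (2 * d) → Fin d × Bool) : Prop :=
  ∀ v, Function.Bijective (mech v)

variable {d n : ℕ} {mech : Vd d → ZMod (2 * d) → Fin d × Bool} {r₀ : Vd d → ZMod (2 * d)}

/-- The final cluster `Rₙ` of occupied sites. -/
def RotorExec.cluster (E : RotorExec d n mech r₀) : Finset (Vd d) := (E.conf E.T).occ

/-- The odometer: total number of exits from `x` by all particles. -/
def RotorExec.u (E : RotorExec d n mech r₀) (x : Vd d) : ℕ :=
  ((Finset.range E.T).filter
    (fun i => (E.conf i).walker = some x ∧ x ∈ (E.conf i).occ)).card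

/-- `N(x,y)`: total number of particle moves from `x` to `y`. -/
def RotorExec.N (E : RotorExec d n mech r₀) (x y : Vd d) : ℕ :=
  ((Finset.range E.T).filter (fun i => (E.conf i).walker = some x ∧
    x ∈ (E.conf i).occ ∧ (E.conf (i + 1)).walker = some y)).card

/-- `θ(x,y) = N(x,y) − N(y,x)`: net number of crossings of the directed edge `(x,y)`. -/
def RotorExec.theta (E : RotorExec d n mech r₀) (x y : Vd d) : ℤ :=
  (E.N x y : ℤ) - (E.N y x : ℤ)

/-- The squared Euclidean norm of a lattice point (an integer). -/
def inorm2 {d : ℕ} (x : Vd d) : ℤ := ∑ i, (x i) ^ 2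

/-- The lattice ball `B(x,k) ∩ ℤᵈ` of Euclidean radius `k` about `x`. -/
noncomputable def dball {d : ℕ} (x : Vd d) (k : ℕ) : Finset (Vd d) :=
  (Finset.Icc (x - fun _ => (k : ℤ)) (x + fun _ => (k : ℤ))).filter
    (fun y => inorm2 (y - x) < (k : ℤ) ^ 2)

/-- The average of `f` over the lattice ball `B(x,k) ∩ ℤᵈ`. -/
noncomputable def Sk {d : ℕ} (k : ℕ) (f : Vd d → ℝ) (x : Vd d) : ℝ :=
  (∑ y ∈ dball x k, f y) / (dball x k).card

section NbrLemmas
variable {d : ℕ}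

def rev {d : ℕ} (j : Fin d × Bool) : Fin d × Bool := (j.1, !j.2)

@[simp] lemma rev_rev (j : Fin d × Bool) : rev (rev j) = j := by
  cases j with | mk i b => cases b <;> simp [rev]

lemma nbr_add (x : Vd d) (j : Fin d × Bool) :
    nbr x j = x + (if j.2 then Pi.single j.1 1 else - Pi.single j.1 1) := by
  cases j with | mk i b => cases b <;> simp [nbr, sub_eq_add_neg]

@[simp] lemma nbr_rev (x : Vd d) (j : Fin d × Bool) : nbr (nbr x j) (rev j) = x := by
  cases j with | mk i b => cases b <;> simp [nbr, rev] <;> abel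

lemma nbr_apply (x : Vd d) (j : Fin d × Bool) (i : Fin d) :
    nbr x j i = x i + (if i = j.1 then (if j.2 then 1 else -1) else 0) := by
  cases j with | mk a b =>
  cases b <;> simp [nbr, Pi.single_apply] <;> by_cases h : i = a <;> simp [h] <;> ring

lemma nbr_ne (x : Vd d) (j : Fin d × Bool) : nbr x j ≠ x := by
  intro h
  have := congrFun h j.1
  rw [nbr_apply] at this
  cases hb : j.2 <;> simp [hb] at this <;> omega

lemma nbr_right_injective (x : Vd d) : Function.Injective (nbr x) := by
  intro j j' h
  have h1 := congrFun h j.1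
  have h2 := congrFun h j'.1
  rw [nbr_apply, nbr_apply] at h1
  rw [nbr_apply, nbr_apply] at h2
  cases j with | mk a b =>
  cases j' with | mk a' b' =>
  simp only at h1 h2 ⊢
  by_cases hab : a = a'
  · subst hab
    cases b <;> cases b' <;> simp_all <;> omega
  · exfalso
    simp [hab, Ne.symm hab] at h1 h2
    cases b <;> cases b' <;> simp_all <;> omega

end NbrLemmas

namespace RotorExec
variable (E : RotorExec d n mech r₀)

/-- number of departures from `x` strictly before time `i`. -/
def mcount (x : Vd d) (i : ℕ) : ℕ :=
  ((Finset.range i).filter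
    (fun t => (E.conf t).walker = some x ∧ x ∈ (E.conf t).occ)).card

lemma u_eq_mcount (x : Vd d) : E.u x = E.mcount x E.T := rfl

lemma mcount_mono (x : Vd d) {i j : ℕ} (h : i ≤ j) : E.mcount x i ≤ E.mcount x j :=
  Finset.card_le_card (Finset.filter_subset_filter _ (Finset.range_subset_range.2 h))

lemma mcount_succ (x : Vd d) (i : ℕ) :
    E.mcount x (i+1) = E.mcount x i +
      (if (E.conf i).walker = some x ∧ x ∈ (E.conf i).occ then 1 else 0) := by
  unfold mcount
  rw [Finset.range_add_one, Finset.filter_insert]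
  split
  · rw [Finset.card_insert_of_notMem (by simp)]
  · simp

lemma rstep_inv {c c' : RConf d} (h : RStep mech c c') :
    (c.walker = none ∧ c' = ⟨c.rotors, c.occ, some 0⟩) ∨
    (∃ p, c.walker = some p ∧ p ∉ c.occ ∧ c' = ⟨c.rotors, insert p c.occ, none⟩) ∨
    (∃ p, c.walker = some p ∧ p ∈ c.occ ∧
      c' = ⟨Function.update c.rotors p (c.rotors p + 1), c.occ,
        some (nbr p (mech p (c.rotors p + 1)))⟩) := by
  cases h with
  | launch h => exact Or.inl ⟨h, rfl⟩
  | settle p h hp => exact Or.inr (Or.inl ⟨p, h, hp, rfl⟩)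
  | move p h hp => exact Or.inr (Or.inr ⟨p, h, hp, rfl⟩)

lemma step_move {i : ℕ} {p : Vd d} (hi : i < E.T) (hw : (E.conf i).walker = some p)
    (hp : p ∈ (E.conf i).occ) :
    E.conf (i+1) = ⟨Function.update (E.conf i).rotors p ((E.conf i).rotors p + 1),
      (E.conf i).occ, some (nbr p (mech p ((E.conf i).rotors p + 1)))⟩ := by
  rcases rstep_inv (E.step i hi) with ⟨h, _⟩ | ⟨q, h, hq, _⟩ | ⟨q, h, hq, hc⟩
  · rw [h] at hw; exact absurd hw (by simp)
  · rw [h] at hw; obtain rfl : q = p := by injection hw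
    exact absurd hp hq
  · rw [h] at hw; obtain rfl : q = p := by injection hw
    exact hc

lemma step_settle {i : ℕ} {p : Vd d} (hi : i < E.T) (hw : (E.conf i).walker = some p)
    (hp : p ∉ (E.conf i).occ) :
    E.conf (i+1) = ⟨(E.conf i).rotors, insert p (E.conf i).occ, none⟩ := by
  rcases rstep_inv (E.step i hi) with ⟨h, _⟩ | ⟨q, h, hq, hc⟩ | ⟨q, h, hq, _⟩
  · rw [h] at hw; exact absurd hw (by simp)
  · rw [h] at hw; obtain rfl : q = p := by injection hw
    exact hc
  · rw [h] at hw; obtain rfl : q = p := by injection hw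
    exact absurd hq hp

lemma occ_subset_succ {i : ℕ} (hi : i < E.T) :
    (E.conf i).occ ⊆ (E.conf (i+1)).occ := by
  rcases rstep_inv (E.step i hi) with ⟨_, hc⟩ | ⟨q, _, _, hc⟩ | ⟨q, _, _, hc⟩
  · rw [hc]
  · rw [hc]; exact Finset.subset_insert _ _
  · rw [hc]

lemma occ_mono {i j : ℕ} (hij : i ≤ j) (hj : j ≤ E.T) :
    (E.conf i).occ ⊆ (E.conf j).occ := by
  induction j, hij using Nat.le_induction with
  | base => exact Finset.Subset.refl _
  | succ m hm ih =>
      exact (ih (le_trans (Nat.le_succ m) hj)).trans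
        (E.occ_subset_succ (Nat.lt_of_succ_le hj))

lemma rotors_eq (x : Vd d) : ∀ i, i ≤ E.T →
    (E.conf i).rotors x = r₀ x + (E.mcount x i : ZMod (2*d)) := by
  intro i
  induction i with
  | zero => intro _; rw [E.init]; simp [mcount]
  | succ i ih =>
      intro hi
      have hi' : i < E.T := Nat.lt_of_succ_le hi
      have ihv := ih (le_of_lt hi')
      rw [E.mcount_succ]
      by_cases hc : (E.conf i).walker = some x ∧ x ∈ (E.conf i).occ
      · obtain ⟨hw, ho⟩ := hc
        rw [E.step_move hi' hw ho]
        rw [if_pos ⟨hw, ho⟩]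
        simp only [Function.update_self, ihv]
        push_cast; ring
      · have hrot : (E.conf (i+1)).rotors x = (E.conf i).rotors x := by
          rcases rstep_inv (E.step i hi') with ⟨_, hc2⟩ | ⟨q, _, _, hc2⟩ | ⟨q, hw, hq, hc2⟩
          · rw [hc2]
          · rw [hc2]
          · have hqx : q ≠ x := by
              intro hqx; subst hqx; exact hc ⟨hw, hq⟩
            rw [hc2]
            exact Function.update_of_ne (Ne.symm hqx) _ _
        rw [hrot, ihv, if_neg hc]
        simp

lemma dep_target {i : ℕ} {x : Vd d} (hi : i < E.T) (hw : (E.conf i).walker = some x)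
    (ho : x ∈ (E.conf i).occ) :
    (E.conf (i+1)).walker = some (nbr x (mech x (r₀ x + (E.mcount x i : ZMod (2*d)) + 1))) := by
  rw [E.step_move hi hw ho]
  simp [E.rotors_eq x i (le_of_lt hi)]


open Finset in
lemma dep_filter (x : Vd d) (Q : ℕ → Prop) [DecidablePred Q] :
    (((Finset.range E.T).filter
        (fun t => (E.conf t).walker = some x ∧ x ∈ (E.conf t).occ)).filter
      (fun t => Q (E.mcount x t))).card
    = ((Finset.range (E.u x)).filter Q).card := by
  classical
  set D := (Finset.range E.T).filter
      (fun t => (E.conf t).walker = some x ∧ x ∈ (E.conf t).occ) with hD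
  set f := E.mcount x with hf
  have hsucc : ∀ t ∈ D, f (t+1) = f t + 1 := by
    intro t ht
    rw [hD, Finset.mem_filter] at ht
    rw [hf, E.mcount_succ, if_pos ht.2]
  have hlt : ∀ t ∈ D, ∀ t' ∈ D, t < t' → f t < f t' := by
    intro t ht t' ht' h
    have h1 := hsucc t ht
    have h2 : f (t+1) ≤ f t' := E.mcount_mono x h
    omega
  have hinj : Set.InjOn f D := by
    intro t ht t' ht' h
    rcases lt_trichotomy t t' with hc | hc | hc
    · exact absurd h (Nat.ne_of_lt (hlt t ht t' ht' hc))
    · exact hc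
    · exact absurd h.symm (Nat.ne_of_lt (hlt t' ht' t ht hc))
  have hmem : ∀ t ∈ D, f t < E.u x := by
    intro t ht
    have h1 := hsucc t ht
    have h2 : f (t+1) ≤ f E.T := E.mcount_mono x
      (by rw [hD, Finset.mem_filter, Finset.mem_range] at ht; omega)
    have h3 : f E.T = E.u x := rfl
    omega
  have hcardD : D.card = E.u x := rfl
  have himg : D.image f = Finset.range (E.u x) := by
    apply Finset.eq_of_subset_of_card_le
    · intro s hs
      rw [Finset.mem_image] at hs
      obtain ⟨t, ht, rfl⟩ := hs
      exact Finset.mem_range.2 (hmem t ht)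
    · rw [Finset.card_range, ← hcardD, Finset.card_image_of_injOn hinj]
  have key : (D.filter (fun t => Q (f t))).image f = (Finset.range (E.u x)).filter Q := by
    rw [← himg, Finset.filter_image]
  rw [← key, Finset.card_image_of_injOn
    (hinj.mono (fun t ht => (Finset.mem_filter.1 ht).1))]

lemma N_eq (x z : Vd d) : E.N x z =
    ((Finset.range (E.u x)).filter
      (fun s : ℕ => nbr x (mech x (r₀ x + (s : ZMod (2*d)) + 1)) = z)).card := by
  classical
  rw [← E.dep_filter x (fun s : ℕ => nbr x (mech x (r₀ x + (s : ZMod (2*d)) + 1)) = z)]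
  unfold N
  rw [Finset.filter_filter]
  apply congrArg
  apply Finset.filter_congr
  intro t ht
  rw [Finset.mem_range] at ht
  constructor
  · rintro ⟨hw, ho, htgt⟩
    refine ⟨⟨hw, ho⟩, ?_⟩
    rw [E.dep_target ht hw ho] at htgt
    injection htgt
  · rintro ⟨⟨hw, ho⟩, htgt⟩
    exact ⟨hw, ho, by rw [E.dep_target ht hw ho, htgt]⟩

end RotorExec

open Finset in
lemma count_mod (m M r : ℕ) (hm : 0 < m) (hr : r < m) :
    M ≤ m * (((Finset.range M).filter (fun s => s % m = r)).card) + m ∧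
    m * (((Finset.range M).filter (fun s => s % m = r)).card) ≤ M + m := by
  classical
  set c := ((Finset.range M).filter (fun s => s % m = r)).card with hc
  have hlow : M / m ≤ c := by
    rw [hc, ← Finset.card_range (M / m)]
    apply Finset.card_le_card_of_injOn (fun t => r + t * m)
    · intro t ht
      rw [Finset.mem_coe, Finset.mem_range] at ht
      rw [Finset.mem_coe, Finset.mem_filter, Finset.mem_range]
      constructor
      · have h1 : (t+1) * m ≤ (M / m) * m := Nat.mul_le_mul_right m ht
        have h2 : (M / m) * m ≤ M := Nat.div_mul_le_self M m
        nlinarith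
      · rw [Nat.add_mul_mod_self_right]
        exact Nat.mod_eq_of_lt hr
    · intro a _ b _ h
      simp only at h
      have := Nat.eq_of_mul_eq_mul_right hm (by omega : a * m = b * m)
      exact this
  have hhigh : c ≤ M / m + 1 := by
    rw [hc, ← Finset.card_range (M / m + 1)]
    apply Finset.card_le_card_of_injOn (fun s => s / m)
    · intro s hs
      rw [Finset.mem_coe, Finset.mem_filter, Finset.mem_range] at hs
      rw [Finset.mem_coe, Finset.mem_range]
      show s / m < M / m + 1
      have : s / m ≤ M / m := Nat.div_le_div_right (le_of_lt hs.1)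
      omega
    · intro a ha b hb h
      simp only [Finset.coe_filter, Set.mem_setOf_eq] at ha hb
      obtain ⟨-, ha2⟩ := ha
      obtain ⟨-, hb2⟩ := hb
      simp only at h
      have h1 := Nat.div_add_mod a m
      have h2 := Nat.div_add_mod b m
      rw [h] at h1
      omega
  have h1 := Nat.div_add_mod M m
  have h2 : M % m < m := Nat.mod_lt M hm
  constructor
  · have : m * (M / m) ≤ m * c := Nat.mul_le_mul_left m hlow
    omega
  · have : m * c ≤ m * (M / m + 1) := Nat.mul_le_mul_left m hhigh
    have h3 : m * (M / m + 1) = m * (M / m) + m := by ring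
    omega

namespace RotorExec
variable (E : RotorExec d n mech r₀)

lemma N_bound (hs : SimpleMech mech) (hd : 0 < d) (x : Vd d) (j : Fin d × Bool) :
    (E.u x : ℤ) - 2*d ≤ 2 * d * E.N x (nbr x j) ∧
    (2 * d * E.N x (nbr x j) : ℤ) ≤ E.u x + 2*d := by
  classical
  haveI : NeZero (2*d) := ⟨by omega⟩
  set e := Equiv.ofBijective (mech x) (hs x) with he
  set a : ZMod (2*d) := e.symm j - r₀ x - 1 with ha
  have hiff : ∀ s : ℕ, (nbr x (mech x (r₀ x + (s : ZMod (2*d)) + 1)) = nbr x j)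
      ↔ s % (2*d) = a.val := by
    intro s
    rw [nbr_right_injective x |>.eq_iff]
    have h1 : mech x (r₀ x + (s : ZMod (2*d)) + 1) = j ↔
        r₀ x + (s : ZMod (2*d)) + 1 = e.symm j := e.apply_eq_iff_eq_symm_apply
    rw [h1]
    constructor
    · intro h
      have : (s : ZMod (2*d)) = a := by rw [ha, ← h]; ring
      rw [← this, ZMod.val_natCast]
    · intro h
      have h2 : ((s % (2*d) : ℕ) : ZMod (2*d)) = (s : ZMod (2*d)) := ZMod.natCast_mod s (2*d)
      have h3 : ((a.val : ℕ) : ZMod (2*d)) = a := ZMod.natCast_rightInverse a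
      have : (s : ZMod (2*d)) = a := by rw [← h2, h, h3]
      rw [this, ha]; ring
  have hN : E.N x (nbr x j) =
      ((Finset.range (E.u x)).filter (fun s => s % (2*d) = a.val)).card := by
    rw [E.N_eq x (nbr x j)]
    congr 1
    exact Finset.filter_congr (fun s _ => by rw [hiff s])
  obtain ⟨h1, h2⟩ := count_mod (2*d) (E.u x) a.val (by omega) (ZMod.val_lt a)
  rw [hN]
  constructor
  · have := h1; zify at this ⊢; linarith
  · have := h2; zify at this ⊢; linarith

lemma sum_N_out (x : Vd d) : ∑ j : Fin d × Bool, E.N x (nbr x j) = E.u x := by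
  classical
  have h : ∀ j : Fin d × Bool, E.N x (nbr x j) =
      ((Finset.range (E.u x)).filter
        (fun s : ℕ => mech x (r₀ x + (s : ZMod (2*d)) + 1) = j)).card := by
    intro j
    rw [E.N_eq x (nbr x j)]
    congr 1
    exact Finset.filter_congr (fun s _ => by rw [nbr_right_injective x |>.eq_iff])
  rw [Finset.sum_congr rfl (fun j _ => h j)]
  rw [← Finset.card_eq_sum_card_fiberwise
    (f := fun s : ℕ => mech x (r₀ x + (s : ZMod (2*d)) + 1))
    (fun s _ => Finset.mem_univ _)]
  exact (Finset.card_range _)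

end RotorExec

open Finset in
lemma exists_transition {P : ℕ → Prop} [DecidablePred P] :
    ∀ T : ℕ, ¬ P 0 → P T → ∃ t < T, ¬ P t ∧ P (t+1) := by
  intro T
  induction T with
  | zero => intro h0 hT; exact absurd hT h0
  | succ T ih =>
      intro h0 hT
      by_cases hP : P T
      · obtain ⟨t, ht, h⟩ := ih h0 hP
        exact ⟨t, Nat.lt_succ_of_lt ht, h⟩
      · exact ⟨T, Nat.lt_succ_self T, hP, hT⟩

namespace RotorExec
variable (E : RotorExec d n mech r₀)

/-- The settling characterization: times when the walker is at an unoccupied `x`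
are exactly the times when `x` becomes occupied. -/
lemma settle_iff {x : Vd d} {t : ℕ} (ht : t < E.T) :
    ((E.conf t).walker = some x ∧ x ∉ (E.conf t).occ) ↔
    (x ∉ (E.conf t).occ ∧ x ∈ (E.conf (t+1)).occ) := by
  constructor
  · rintro ⟨hw, ho⟩
    refine ⟨ho, ?_⟩
    rw [E.step_settle ht hw ho]
    exact Finset.mem_insert_self x _
  · rintro ⟨ho, ho'⟩
    rcases rstep_inv (E.step t ht) with ⟨h, hc⟩ | ⟨q, h, hq, hc⟩ | ⟨q, h, hq, hc⟩
    · rw [hc] at ho'; exact absurd ho' ho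
    · rw [hc] at ho'
      simp only [Finset.mem_insert] at ho'
      rcases ho' with rfl | ho'
      · exact ⟨h, ho⟩
      · exact absurd ho' ho
    · rw [hc] at ho'; exact absurd ho' ho

lemma card_settles {x : Vd d} (hx : x ∈ E.cluster) :
    ((Finset.range E.T).filter
      (fun t => (E.conf t).walker = some x ∧ x ∉ (E.conf t).occ)).card = 1 := by
  classical
  have h0 : x ∉ (E.conf 0).occ := by rw [E.init]; simp
  have hT : x ∈ (E.conf E.T).occ := hx
  obtain ⟨t₀, ht₀T, h₀, h₁⟩ := exists_transition (P := fun t => x ∈ (E.conf t).occ) E.T h0 hT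
  rw [Finset.card_eq_one]
  refine ⟨t₀, ?_⟩
  ext t
  simp only [Finset.mem_filter, Finset.mem_range, Finset.mem_singleton]
  constructor
  · rintro ⟨htT, hw, ho⟩
    have h2 := (E.settle_iff htT).1 ⟨hw, ho⟩
    by_contra hne
    rcases Nat.lt_or_ge t t₀ with hlt | hge
    · exact h₀ (E.occ_mono (Nat.succ_le_of_lt hlt) (le_of_lt ht₀T) h2.2)
    · have hlt : t₀ < t := lt_of_le_of_ne hge (fun h => hne h.symm)
      exact h2.1 (E.occ_mono (Nat.succ_le_of_lt hlt) (le_of_lt htT) h₁)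
  · rintro rfl
    exact ⟨ht₀T, (E.settle_iff ht₀T).2 ⟨h₀, h₁⟩⟩

lemma sum_N_in (x : Vd d) (hx0 : x ≠ 0) (hx : x ∈ E.cluster) :
    ∑ j : Fin d × Bool, E.N (nbr x j) x = E.u x + 1 := by
  classical
  set At := (Finset.range E.T).filter (fun t => (E.conf t).walker = some x) with hAt
  have hcardAt : At.card = E.u x + 1 := by
    have hsplit := Finset.card_filter_add_card_filter_not
      (s := At) (p := fun t => x ∈ (E.conf t).occ)
    have h1 : At.filter (fun t => x ∈ (E.conf t).occ) = (Finset.range E.T).filter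
        (fun t => (E.conf t).walker = some x ∧ x ∈ (E.conf t).occ) := by
      rw [hAt, Finset.filter_filter]
    have h2 : At.filter (fun t => ¬ x ∈ (E.conf t).occ) = (Finset.range E.T).filter
        (fun t => (E.conf t).walker = some x ∧ x ∉ (E.conf t).occ) := by
      rw [hAt, Finset.filter_filter]
    rw [h1, h2] at hsplit
    have h3 := E.card_settles hx
    unfold u
    omega
  set S₂ := (Finset.range E.T).filter (fun t => (E.conf (t+1)).walker = some x) with hS₂
  have hcardS₂ : S₂.card = At.card := by
    refine Finset.card_bij' (fun t _ => t + 1) (fun s _ => s - 1) ?_ ?_ ?_ ?_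
    · intro t ht
      simp only [hS₂, Finset.mem_filter, Finset.mem_range] at ht
      simp only [hAt, Finset.mem_filter, Finset.mem_range]
      have hne : t + 1 ≠ E.T := fun h => by
        rw [h, E.walker_final] at ht
        exact absurd ht.2 (by simp)
      exact ⟨lt_of_le_of_ne (Nat.succ_le_of_lt ht.1) hne, ht.2⟩
    · intro s hs
      simp only [hAt, Finset.mem_filter, Finset.mem_range] at hs
      simp only [hS₂, Finset.mem_filter, Finset.mem_range]
      have hs0 : s ≠ 0 := fun h => by
        rw [h, E.init] at hs
        exact absurd hs.2 (by simp)
      have hss : s - 1 + 1 = s := Nat.succ_pred_eq_of_ne_zero hs0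
      rw [hss]
      exact ⟨by omega, hs.2⟩
    · intro t ht; show t + 1 - 1 = t; omega
    · intro s hs
      simp only [hAt, Finset.mem_filter, Finset.mem_range] at hs
      have hs0 : s ≠ 0 := fun h => by
        rw [h, E.init] at hs
        exact absurd hs.2 (by simp)
      show s - 1 + 1 = s
      omega
  have hpart : S₂ = Finset.univ.biUnion (fun j : Fin d × Bool =>
      (Finset.range E.T).filter (fun t => (E.conf t).walker = some (nbr x j) ∧
        nbr x j ∈ (E.conf t).occ ∧ (E.conf (t+1)).walker = some x)) := by
    ext t
    simp only [hS₂, Finset.mem_filter, Finset.mem_range, Finset.mem_biUnion,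
      Finset.mem_univ, true_and]
    constructor
    · rintro ⟨htT, hw⟩
      rcases rstep_inv (E.step t htT) with ⟨h, hc⟩ | ⟨q, h, hq, hc⟩ | ⟨q, h, hq, hc⟩
      · rw [hc] at hw
        simp only at hw
        injection hw with hw
        exact absurd hw.symm hx0
      · rw [hc] at hw
        exact absurd hw (by simp)
      · rw [hc] at hw
        simp only at hw
        injection hw with hw
        refine ⟨rev (mech q ((E.conf t).rotors q + 1)), htT, ?_, ?_, ?_⟩
        · rw [← hw, nbr_rev]; exact h
        · rw [← hw, nbr_rev]; exact hq
        · rw [hc]; simp [hw]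
    · rintro ⟨j, htT, hw, ho, hw'⟩
      exact ⟨htT, hw'⟩
  rw [hpart] at hcardS₂
  rw [Finset.card_biUnion] at hcardS₂
  · rw [hcardAt] at hcardS₂
    exact hcardS₂
  · intro j _ j' _ hjj'
    simp only [Function.onFun]
    rw [Finset.disjoint_left]
    intro t ht ht'
    rw [Finset.mem_filter] at ht ht'
    have h1 : some (nbr x j) = some (nbr x j') := by rw [← ht.2.1, ht'.2.1]
    exact hjj' (nbr_right_injective x (Option.some_injective _ h1))

lemma sum_theta_in (x : Vd d) (hx0 : x ≠ 0) (hx : x ∈ E.cluster) :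
    ∑ j : Fin d × Bool, E.theta (nbr x j) x = 1 := by
  unfold theta
  rw [Finset.sum_sub_distrib]
  have h1 : ∑ j : Fin d × Bool, (E.N (nbr x j) x : ℤ) = (E.u x : ℤ) + 1 := by
    rw [← Nat.cast_sum]
    rw [E.sum_N_in x hx0 hx]
    push_cast; ring
  have h2 : ∑ j : Fin d × Bool, (E.N x (nbr x j) : ℤ) = (E.u x : ℤ) := by
    rw [← Nat.cast_sum, E.sum_N_out x]
  rw [h1, h2]; ring

end RotorExec

section Dball
variable {d : ℕ}

lemma inorm2_nonneg (x : Vd d) : 0 ≤ inorm2 x :=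
  Finset.sum_nonneg (fun i _ => sq_nonneg _)

lemma sq_coord_le_inorm2 (x : Vd d) (i : Fin d) : (x i)^2 ≤ inorm2 x :=
  Finset.single_le_sum (fun i _ => sq_nonneg (x i)) (Finset.mem_univ i)

lemma mem_dball {x y : Vd d} {k : ℕ} :
    y ∈ dball x k ↔ inorm2 (y - x) < (k : ℤ)^2 := by
  rw [dball, Finset.mem_filter]
  constructor
  · exact fun h => h.2
  · intro h
    refine ⟨?_, h⟩
    rw [Finset.mem_Icc]
    constructor <;> intro i <;>
      [skip; skip] <;>
      · have h1 : ((y - x) i)^2 < (k:ℤ)^2 := lt_of_le_of_lt (sq_coord_le_inorm2 _ i) h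
        simp only [Pi.sub_apply, Pi.add_apply] at h1 ⊢
        nlinarith

lemma self_mem_dball {x : Vd d} {k : ℕ} (hk : 0 < k) : x ∈ dball x k := by
  rw [mem_dball]
  have : x - x = (0 : Vd d) := by simp
  rw [this]
  have h0 : inorm2 (0 : Vd d) = 0 := by simp [inorm2]
  rw [h0]
  positivity

lemma dball_card_pos {x : Vd d} {k : ℕ} (hk : 0 < k) : 0 < (dball x k).card :=
  Finset.card_pos.2 ⟨x, self_mem_dball hk⟩

lemma dball_translate (x v : Vd d) (k : ℕ) :
    dball (x + v) k = (dball x k).image (· + v) := by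
  ext y
  rw [mem_dball, Finset.mem_image]
  constructor
  · intro h
    refine ⟨y - v, ?_, by abel⟩
    rw [mem_dball]
    have : y - v - x = y - (x + v) := by abel
    rw [this]
    exact h
  · rintro ⟨z, hz, rfl⟩
    rw [mem_dball] at hz
    have : z + v - (x + v) = z - x := by abel
    rw [this]
    exact hz

lemma dball_translate_card (x v : Vd d) (k : ℕ) :
    (dball (x + v) k).card = (dball x k).card := by
  rw [dball_translate, Finset.card_image_of_injective _ (add_left_injective v)]

lemma dball_translate_sum (x v : Vd d) (k : ℕ) (f : Vd d → ℝ) :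
    ∑ y ∈ dball (x + v) k, f y = ∑ y ∈ dball x k, f (y + v) := by
  rw [dball_translate, Finset.sum_image]
  intro a _ b _ h
  exact add_left_injective v h

lemma lapd_Sk (k : ℕ) (f : Vd d → ℝ) (x : Vd d) :
    lapd (Sk k f) x = (∑ y ∈ dball x k, ∑ j : Fin d × Bool, (f (nbr y j) - f y))
      / (dball x k).card := by
  unfold lapd Sk
  have hnbr : ∀ j : Fin d × Bool, (∑ y ∈ dball (nbr x j) k, f y) = ∑ y ∈ dball x k, f (nbr y j) := by
    intro j
    rw [nbr_add x j, dball_translate_sum]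
    exact Finset.sum_congr rfl (fun y _ => by rw [← nbr_add])
  have hcard : ∀ j : Fin d × Bool, ((dball (nbr x j) k).card : ℝ) = (dball x k).card := by
    intro j
    rw [nbr_add x j, dball_translate_card]
  calc ∑ j : Fin d × Bool, ((∑ y ∈ dball (nbr x j) k, f y) / (dball (nbr x j) k).card
        - (∑ y ∈ dball x k, f y) / (dball x k).card)
      = ∑ j : Fin d × Bool, ((∑ y ∈ dball x k, f (nbr y j)) - ∑ y ∈ dball x k, f y)
          / (dball x k).card := by
        apply Finset.sum_congr rfl
        intro j _
        rw [hcard j, hnbr j, sub_div]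
    _ = (∑ j : Fin d × Bool, ((∑ y ∈ dball x k, f (nbr y j)) - ∑ y ∈ dball x k, f y))
          / (dball x k).card := by rw [Finset.sum_div]
    _ = _ := by
        congr 1
        rw [Finset.sum_comm]
        apply Finset.sum_congr rfl
        intro y _
        rw [Finset.sum_sub_distrib]

end Dball

namespace RotorExec
variable (E : RotorExec d n mech r₀)

/-- the rotor defect `α(y,j) = 2d·N(y, y+e_j) − u(y)`. -/
def alpha (y : Vd d) (j : Fin d × Bool) : ℤ := 2 * d * E.N y (nbr y j) - E.u y

lemma abs_alpha_le (hs : SimpleMech mech) (hd : 0 < d) (y : Vd d) (j : Fin d × Bool) :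
    |E.alpha y j| ≤ 2 * d := by
  obtain ⟨h1, h2⟩ := E.N_bound hs hd y j
  rw [abs_le, alpha]
  constructor <;> linarith

lemma edge_identity (y : Vd d) (j : Fin d × Bool) :
    (E.u (nbr y j) : ℤ) - E.u y =
      2 * d * E.theta (nbr y j) y + E.alpha y j - E.alpha (nbr y j) (rev j) := by
  unfold theta alpha
  rw [nbr_rev]
  ring

/-- The key summation identity with boundary error. -/
lemma sum_lap_bound (hs : SimpleMech mech) (hd : 0 < d) (x : Vd d) (k : ℕ)
    (hball : ∀ y ∈ dball x k, y ∈ E.cluster ∧ y ≠ 0) :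
    |(∑ y ∈ dball x k, ∑ j : Fin d × Bool, ((E.u (nbr y j) : ℤ) - E.u y))
      - 2 * d * (dball x k).card| ≤
      4 * d * (((dball x k) ×ˢ (Finset.univ : Finset (Fin d × Bool))).filter
        (fun p => nbr p.1 p.2 ∉ dball x k)).card := by
  classical
  set B := dball x k with hB
  have hsum : (∑ y ∈ B, ∑ j : Fin d × Bool, ((E.u (nbr y j) : ℤ) - E.u y)) =
      2 * d * B.card +
      ∑ p ∈ B ×ˢ (Finset.univ : Finset (Fin d × Bool)),
        (E.alpha p.1 p.2 - E.alpha (nbr p.1 p.2) (rev p.2)) := by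
    have h1 : ∀ y ∈ B, ∑ j : Fin d × Bool, ((E.u (nbr y j) : ℤ) - E.u y) =
        2 * d + ∑ j : Fin d × Bool, (E.alpha y j - E.alpha (nbr y j) (rev j)) := by
      intro y hy
      rw [Finset.sum_congr rfl (fun j _ => E.edge_identity y j)]
      have hth : ∑ j : Fin d × Bool, (2 * (d:ℤ) * E.theta (nbr y j) y) =
          2 * d * ∑ j : Fin d × Bool, E.theta (nbr y j) y := by
        rw [Finset.mul_sum]
      have h2 : ∑ j : Fin d × Bool, E.theta (nbr y j) y = 1 :=
        E.sum_theta_in y (hball y hy).2 (hball y hy).1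
      calc ∑ j : Fin d × Bool, (2 * (d:ℤ) * E.theta (nbr y j) y + E.alpha y j
              - E.alpha (nbr y j) (rev j))
          = (∑ j : Fin d × Bool, (2 * (d:ℤ) * E.theta (nbr y j) y))
            + ∑ j : Fin d × Bool, (E.alpha y j - E.alpha (nbr y j) (rev j)) := by
            rw [← Finset.sum_add_distrib]
            apply Finset.sum_congr rfl
            intro j _; ring
        _ = 2 * d + ∑ j : Fin d × Bool, (E.alpha y j - E.alpha (nbr y j) (rev j)) := by
            rw [hth, h2]; ring
    rw [Finset.sum_congr rfl h1, Finset.sum_add_distrib, Finset.sum_const,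
      Finset.sum_product]
    push_cast
    ring
  rw [hsum]
  have hsplit : ∑ p ∈ B ×ˢ (Finset.univ : Finset (Fin d × Bool)),
        (E.alpha p.1 p.2 - E.alpha (nbr p.1 p.2) (rev p.2)) =
      (∑ p ∈ (B ×ˢ Finset.univ).filter (fun p => nbr p.1 p.2 ∈ B),
        (E.alpha p.1 p.2 - E.alpha (nbr p.1 p.2) (rev p.2))) +
      (∑ p ∈ (B ×ˢ Finset.univ).filter (fun p => nbr p.1 p.2 ∉ B),
        (E.alpha p.1 p.2 - E.alpha (nbr p.1 p.2) (rev p.2))) := by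
    rw [← Finset.sum_filter_add_sum_filter_not (B ×ˢ Finset.univ)
      (fun p => nbr p.1 p.2 ∈ B)]
  have hint : (∑ p ∈ (B ×ˢ Finset.univ).filter (fun p => nbr p.1 p.2 ∈ B),
      (E.alpha p.1 p.2 - E.alpha (nbr p.1 p.2) (rev p.2))) = 0 := by
    apply Finset.sum_involution (fun p _ => (nbr p.1 p.2, rev p.2))
    · intro p hp
      simp only [nbr_rev, rev_rev]
      ring
    · intro p hp _
      intro h
      have := congrArg Prod.fst h
      simp only at this
      exact nbr_ne p.1 p.2 this
    · intro p hp
      simp only [Finset.mem_filter, Finset.mem_product, Finset.mem_univ, and_true] at hp ⊢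
      exact ⟨hp.2, by rw [nbr_rev]; exact hp.1⟩
    · intro p hp
      simp only [nbr_rev, rev_rev]
  rw [hsplit, hint, zero_add]
  have habs : |∑ p ∈ (B ×ˢ Finset.univ).filter (fun p => nbr p.1 p.2 ∉ B),
      (E.alpha p.1 p.2 - E.alpha (nbr p.1 p.2) (rev p.2))| ≤
      4 * d * ((B ×ˢ (Finset.univ : Finset (Fin d × Bool))).filter
        (fun p => nbr p.1 p.2 ∉ B)).card := by
    calc |∑ p ∈ (B ×ˢ Finset.univ).filter (fun p => nbr p.1 p.2 ∉ B),
        (E.alpha p.1 p.2 - E.alpha (nbr p.1 p.2) (rev p.2))|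
        ≤ ∑ p ∈ (B ×ˢ Finset.univ).filter (fun p => nbr p.1 p.2 ∉ B),
          |E.alpha p.1 p.2 - E.alpha (nbr p.1 p.2) (rev p.2)| :=
          Finset.abs_sum_le_sum_abs _ _
      _ ≤ ∑ _p ∈ (B ×ˢ Finset.univ).filter (fun p => nbr p.1 p.2 ∉ B), (4 * (d:ℤ)) := by
          apply Finset.sum_le_sum
          intro p _
          calc |E.alpha p.1 p.2 - E.alpha (nbr p.1 p.2) (rev p.2)|
              ≤ |E.alpha p.1 p.2| + |E.alpha (nbr p.1 p.2) (rev p.2)| := abs_sub _ _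
            _ ≤ 2 * d + 2 * d := add_le_add (E.abs_alpha_le hs hd _ _) (E.abs_alpha_le hs hd _ _)
            _ = 4 * d := by ring
      _ = 4 * d * ((B ×ˢ (Finset.univ : Finset (Fin d × Bool))).filter
            (fun p => nbr p.1 p.2 ∉ B)).card := by
          rw [Finset.sum_const]
          push_cast
          ring
  calc |2 * (d:ℤ) * B.card + (∑ p ∈ (B ×ˢ Finset.univ).filter (fun p => nbr p.1 p.2 ∉ B),
        (E.alpha p.1 p.2 - E.alpha (nbr p.1 p.2) (rev p.2))) - 2 * d * B.card|
      = |∑ p ∈ (B ×ˢ Finset.univ).filter (fun p => nbr p.1 p.2 ∉ B),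
        (E.alpha p.1 p.2 - E.alpha (nbr p.1 p.2) (rev p.2))| := by
        congr 1; ring
    _ ≤ _ := habs

end RotorExec

section Annulus
variable {d : ℕ}

lemma inorm2_nbr_le (y x : Vd d) (j : Fin d × Bool) :
    inorm2 (nbr y j - x) ≤ inorm2 (y - x) + 2 * |(y - x) j.1| + 1 := by
  unfold inorm2
  have hterm : ∀ i : Fin d, ((nbr y j - x) i)^2 ≤
      ((y - x) i)^2 + (if i = j.1 then 2 * |(y - x) j.1| + 1 else 0) := by
    intro i
    have h := nbr_apply y j i
    by_cases hi : i = j.1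
    · subst hi
      cases hb : j.2 <;>
        simp only [Pi.sub_apply, h, hb, if_pos rfl, Bool.false_eq_true, if_true, if_false] <;>
        nlinarith [le_abs_self (y j.1 - x j.1), neg_abs_le (y j.1 - x j.1)]
    · simp only [Pi.sub_apply, h, if_neg hi, add_zero, if_neg hi]
      ring_nf
      exact le_refl _
  calc ∑ i, ((nbr y j - x) i)^2
      ≤ ∑ i, (((y - x) i)^2 + (if i = j.1 then 2 * |(y - x) j.1| + 1 else 0)) :=
        Finset.sum_le_sum (fun i _ => hterm i)
    _ = (∑ i, ((y - x) i)^2) + (2 * |(y - x) j.1| + 1) := by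
        rw [Finset.sum_add_distrib]
        congr 1
        rw [Finset.sum_ite_eq' Finset.univ j.1 (fun _ => 2 * |(y - x) j.1| + 1)]
        simp
    _ = (∑ i, ((y - x) i)^2) + 2 * |(y - x) j.1| + 1 := by ring

lemma coord_le_of_mem {x y : Vd d} {k : ℕ} (hy : y ∈ dball x k) (i : Fin d) :
    |(y - x) i| ≤ (k:ℤ) - 1 := by
  rw [mem_dball] at hy
  have h1 : ((y - x) i)^2 < (k:ℤ)^2 := lt_of_le_of_lt (sq_coord_le_inorm2 _ i) hy
  have h2 : |(y - x) i| < (k:ℤ) := by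
    nlinarith [abs_nonneg ((y - x) i), sq_abs ((y - x) i), Int.natCast_nonneg k]
  omega

lemma boundary_mem_ann {x : Vd d} {k : ℕ} {y : Vd d} {j : Fin d × Bool}
    (hy : y ∈ dball x k) (hn : nbr y j ∉ dball x k) :
    ((k:ℤ) - 1)^2 ≤ inorm2 (y - x) := by
  rw [mem_dball, not_lt] at hn
  have h1 := inorm2_nbr_le y x j
  have h2 := coord_le_of_mem hy j.1
  have h3 := abs_nonneg ((y - x) j.1)
  nlinarith

lemma boundary_card_le {x : Vd d} {k : ℕ} :
    ((((dball x k) ×ˢ (Finset.univ : Finset (Fin d × Bool))).filter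
        (fun p => nbr p.1 p.2 ∉ dball x k)).card : ℤ) ≤
      2 * d * (((dball x k).filter
        (fun y => ¬ inorm2 (y - x) < ((k:ℤ) - 1)^2)).card : ℤ) := by
  classical
  have hsub : ((dball x k) ×ˢ (Finset.univ : Finset (Fin d × Bool))).filter
        (fun p => nbr p.1 p.2 ∉ dball x k) ⊆
      ((dball x k).filter (fun y => ¬ inorm2 (y - x) < ((k:ℤ) - 1)^2)) ×ˢ
        (Finset.univ : Finset (Fin d × Bool)) := by
    intro p hp
    rw [Finset.mem_filter, Finset.mem_product] at hp
    rw [Finset.mem_product, Finset.mem_filter]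
    exact ⟨⟨hp.1.1, not_lt.2 (boundary_mem_ann hp.1.1 hp.2)⟩, hp.1.2⟩
  have hcard := Finset.card_le_card hsub
  rw [Finset.card_product] at hcard
  have huniv : (Finset.univ : Finset (Fin d × Bool)).card = 2 * d := by
    simp [Finset.card_univ]
    ring
  rw [huniv] at hcard
  calc ((((dball x k) ×ˢ (Finset.univ : Finset (Fin d × Bool))).filter
        (fun p => nbr p.1 p.2 ∉ dball x k)).card : ℤ)
      ≤ ((((dball x k).filter (fun y => ¬ inorm2 (y - x) < ((k:ℤ) - 1)^2)).card
          * (2 * d) : ℕ) : ℤ) := by exact_mod_cast hcard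
    _ = 2 * d * (((dball x k).filter
        (fun y => ¬ inorm2 (y - x) < ((k:ℤ) - 1)^2)).card : ℤ) := by push_cast; ring

lemma ann_card_eq {x : Vd d} {k : ℕ} (hk : 1 ≤ k) :
    (((dball x k).filter (fun y => ¬ inorm2 (y - x) < ((k:ℤ) - 1)^2)).card : ℤ) =
      ((dball x k).card : ℤ) - ((dball x (k-1)).card : ℤ) := by
  classical
  have hfilter : (dball x k).filter (fun y => inorm2 (y - x) < ((k:ℤ) - 1)^2) =
      dball x (k-1) := by
    ext y
    rw [Finset.mem_filter, mem_dball, mem_dball]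
    have hcast : (((k : ℕ) - 1 : ℕ) : ℤ) = (k : ℤ) - 1 := by
      rw [Nat.cast_sub hk]; simp
    rw [hcast]
    constructor
    · exact fun h => h.2
    · intro h
      refine ⟨lt_of_lt_of_le h ?_, h⟩
      have : (0:ℤ) ≤ (k:ℤ) - 1 := by
        have := Int.natCast_nonneg k; omega
      nlinarith
  have hsplit := Finset.card_filter_add_card_filter_not
    (s := dball x k) (p := fun y => inorm2 (y - x) < ((k:ℤ) - 1)^2)
  rw [hfilter] at hsplit
  push_cast [← hsplit]
  ring

end Annulus

section Geometry
open MeasureTheory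
open scoped ENNReal NNReal
variable {d : ℕ}

noncomputable def gconst (d : ℕ) : ℝ := Real.sqrt Real.pi ^ d / Real.Gamma (d / 2 + 1)

lemma gconst_pos (d : ℕ) : 0 < gconst d :=
  div_pos (pow_pos (Real.sqrt_pos.2 Real.pi_pos) d)
    (Real.Gamma_pos_of_pos (by positivity))

def psi {d : ℕ} (y : Vd d) : EuclideanSpace ℝ (Fin d) := WithLp.toLp 2 (fun i => (y i : ℝ))

lemma volume_ball' (hd : 0 < d) (x : EuclideanSpace ℝ (Fin d)) (r : ℝ) (hr : 0 ≤ r) :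
    volume (Metric.ball x r) = ENNReal.ofReal (r ^ d * gconst d) := by
  haveI : Nonempty (Fin d) := ⟨⟨0, hd⟩⟩
  rw [EuclideanSpace.volume_ball, Fintype.card_fin, gconst,
    ENNReal.ofReal_mul (by positivity), ENNReal.ofReal_pow hr]

def cube {d : ℕ} (y : Vd d) : Set (EuclideanSpace ℝ (Fin d)) :=
  {z | ∀ i, (y i : ℝ) - 2⁻¹ ≤ z i ∧ z i < (y i : ℝ) + 2⁻¹}

lemma cube_eq (y : Vd d) : cube y = (MeasurableEquiv.toLp 2 (Fin d → ℝ)).symm ⁻¹'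
    (Set.univ.pi (fun i => Set.Ico ((y i : ℝ) - 2⁻¹) ((y i : ℝ) + 2⁻¹))) := by
  ext z
  simp only [cube, Set.mem_setOf_eq, Set.mem_preimage, Set.mem_pi, Set.mem_univ,
    true_implies, Set.mem_Ico]
  rfl

lemma cube_measurable (y : Vd d) : MeasurableSet (cube y) := by
  rw [cube_eq]
  exact (MeasurableEquiv.toLp 2 (Fin d → ℝ)).symm.measurable
    (MeasurableSet.univ_pi (fun i => measurableSet_Ico))

lemma cube_volume (y : Vd d) : volume (cube y) = 1 := by
  rw [cube_eq]
  rw [(EuclideanSpace.volume_preserving_symm_measurableEquiv_toLp (Fin d)).measure_preimage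
    (MeasurableSet.univ_pi (fun i => measurableSet_Ico)).nullMeasurableSet]
  rw [volume_pi_pi]
  have : ∀ i : Fin d, volume (Set.Ico ((y i : ℝ) - 2⁻¹) ((y i : ℝ) + 2⁻¹)) = 1 := by
    intro i
    rw [Real.volume_Ico]
    norm_num
  rw [Finset.prod_congr rfl (fun i _ => this i)]
  simp

lemma cube_disjoint {y y' : Vd d} (h : y ≠ y') : Disjoint (cube y) (cube y') := by
  rw [Set.disjoint_left]
  intro z hz hz'
  obtain ⟨i, hi⟩ := Function.ne_iff.1 h
  obtain ⟨h1, h2⟩ := hz i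
  obtain ⟨h3, h4⟩ := hz' i
  apply hi
  have habs : |((y i - y' i : ℤ) : ℝ)| < 1 := by
    rw [abs_lt]
    push_cast
    constructor <;> linarith
  have h0 : |y i - y' i| < 1 := by exact_mod_cast habs
  have := Int.abs_lt_one_iff.mp h0
  omega

lemma dist_cube {y : Vd d} {z : EuclideanSpace ℝ (Fin d)} (hz : z ∈ cube y) :
    dist (psi y) z ≤ Real.sqrt d / 2 := by
  rw [EuclideanSpace.dist_eq]
  have hbound : ∀ i : Fin d, dist (psi y i) (z i) ^ 2 ≤ (2⁻¹ : ℝ)^2 := by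
    intro i
    obtain ⟨h1, h2⟩ := hz i
    rw [Real.dist_eq]
    have : |psi y i - z i| ≤ 2⁻¹ := by
      rw [abs_le]
      unfold psi
      constructor <;> simp only <;> linarith
    nlinarith [abs_nonneg (psi y i - z i)]
  have hsum : (∑ i : Fin d, dist (psi y i) (z i) ^ 2) ≤ (d : ℝ) / 4 := by
    calc (∑ i : Fin d, dist (psi y i) (z i) ^ 2) ≤ ∑ _i : Fin d, (2⁻¹:ℝ)^2 :=
          Finset.sum_le_sum (fun i _ => hbound i)
      _ = (d : ℝ) / 4 := by simp [Finset.sum_const]; ring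
  calc Real.sqrt (∑ i : Fin d, dist (psi y i) (z i) ^ 2) ≤ Real.sqrt ((d:ℝ)/4) :=
        Real.sqrt_le_sqrt hsum
    _ = Real.sqrt d / 2 := by
        rw [show (d:ℝ)/4 = (Real.sqrt d / 2)^2 by
          rw [div_pow, Real.sq_sqrt (Nat.cast_nonneg d)]; ring]
        exact Real.sqrt_sq (by positivity)

lemma dist_psi (y c : Vd d) : dist (psi y) (psi c) = Real.sqrt ((inorm2 (y - c) : ℝ)) := by
  rw [EuclideanSpace.dist_eq]
  congr 1
  rw [inorm2]
  push_cast
  apply Finset.sum_congr rfl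
  intro i _
  rw [Real.dist_eq, sq_abs, Pi.sub_apply, Int.cast_sub]
  rfl

lemma mem_dball_iff_dist {c y : Vd d} {r : ℕ} :
    y ∈ dball c r ↔ dist (psi y) (psi c) < r := by
  rw [mem_dball, dist_psi]
  rcases Nat.eq_zero_or_pos r with rfl | hr
  · simp only [Nat.cast_zero]
    constructor
    · intro h; exact absurd h (by simpa using inorm2_nonneg (y - c))
    · intro h; exact absurd h (by simpa using Real.sqrt_nonneg _)
  · rw [Real.sqrt_lt' (by exact_mod_cast hr)]
    constructor <;> intro h <;> exact_mod_cast h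

lemma card_dball_le_vol (hd : 0 < d) (c : Vd d) (r : ℕ) :
    ((dball c r).card : ℝ≥0∞) ≤ volume (Metric.ball (psi c) (r + Real.sqrt d)) := by
  classical
  have hdisj : (↑(dball c r) : Set (Vd d)).PairwiseDisjoint cube := by
    intro a _ b _ hab
    exact cube_disjoint hab
  have hvol := measure_biUnion_finset (μ := volume) hdisj
    (fun y _ => cube_measurable y)
  have hsum : ∑ y ∈ dball c r, volume (cube y) = ((dball c r).card : ℝ≥0∞) := by
    rw [Finset.sum_congr rfl (fun y _ => cube_volume y), Finset.sum_const, nsmul_eq_mul,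
      mul_one]
  have hsubset : (⋃ y ∈ dball c r, cube y) ⊆ Metric.ball (psi c) (r + Real.sqrt d) := by
    intro z hz
    rw [Set.mem_iUnion₂] at hz
    obtain ⟨y, hy, hzy⟩ := hz
    rw [Metric.mem_ball]
    have h1 : dist z (psi y) ≤ Real.sqrt d / 2 := by
      rw [dist_comm]; exact dist_cube hzy
    have h2 : dist (psi y) (psi c) < r := mem_dball_iff_dist.1 hy
    have h3 : (0:ℝ) < Real.sqrt d := Real.sqrt_pos.2 (by exact_mod_cast hd)
    calc dist z (psi c) ≤ dist z (psi y) + dist (psi y) (psi c) := dist_triangle _ _ _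
      _ < Real.sqrt d / 2 + r := by linarith
      _ ≤ r + Real.sqrt d := by linarith
  calc ((dball c r).card : ℝ≥0∞) = ∑ y ∈ dball c r, volume (cube y) := hsum.symm
    _ = volume (⋃ y ∈ dball c r, cube y) := hvol.symm
    _ ≤ volume (Metric.ball (psi c) (r + Real.sqrt d)) := measure_mono hsubset

lemma vol_le_card_dball (hd : 0 < d) (c : Vd d) (r : ℕ) :
    volume (Metric.ball (psi c) (r - Real.sqrt d)) ≤ ((dball c r).card : ℝ≥0∞) := by
  classical
  have hdisj : (↑(dball c r) : Set (Vd d)).PairwiseDisjoint cube := by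
    intro a _ b _ hab
    exact cube_disjoint hab
  have hvol := measure_biUnion_finset (μ := volume) hdisj
    (fun y _ => cube_measurable y)
  have hsum : ∑ y ∈ dball c r, volume (cube y) = ((dball c r).card : ℝ≥0∞) := by
    rw [Finset.sum_congr rfl (fun y _ => cube_volume y), Finset.sum_const, nsmul_eq_mul,
      mul_one]
  have hsubset : Metric.ball (psi c) (r - Real.sqrt d) ⊆ ⋃ y ∈ dball c r, cube y := by
    intro z hz
    rw [Metric.mem_ball] at hz
    set y : Vd d := fun i => ⌊z i + 2⁻¹⌋ with hy
    have hzy : z ∈ cube y := by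
      intro i
      have h1 := Int.floor_le (z i + 2⁻¹)
      have h2 := Int.lt_floor_add_one (z i + 2⁻¹)
      constructor
      · simp only [hy]; linarith
      · simp only [hy]; linarith
    rw [Set.mem_iUnion₂]
    refine ⟨y, ?_, hzy⟩
    rw [mem_dball_iff_dist]
    have h1 : dist (psi y) z ≤ Real.sqrt d / 2 := dist_cube hzy
    have h3 : (0:ℝ) < Real.sqrt d := Real.sqrt_pos.2 (by exact_mod_cast hd)
    calc dist (psi y) (psi c) ≤ dist (psi y) z + dist z (psi c) := dist_triangle _ _ _
      _ < Real.sqrt d / 2 + (r - Real.sqrt d) := by linarith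
      _ ≤ r := by linarith
  calc volume (Metric.ball (psi c) (r - Real.sqrt d))
      ≤ volume (⋃ y ∈ dball c r, cube y) := measure_mono hsubset
    _ = ∑ y ∈ dball c r, volume (cube y) := hvol
    _ = ((dball c r).card : ℝ≥0∞) := hsum

lemma card_dball_le_real (hd : 0 < d) (c : Vd d) (r : ℕ) :
    ((dball c r).card : ℝ) ≤ ((r:ℝ) + Real.sqrt d)^d * gconst d := by
  have h := card_dball_le_vol hd c r
  rw [volume_ball' hd _ _ (by positivity)] at h
  have h2 := ENNReal.toReal_mono (by simp) h
  rw [ENNReal.toReal_ofReal (mul_nonneg (by positivity) (gconst_pos d).le)] at h2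
  have h3 : ((((dball c r).card : ℕ) : ℝ≥0∞)).toReal = ((dball c r).card : ℝ) := rfl
  rw [h3] at h2
  exact h2

lemma card_dball_ge_real (hd : 0 < d) (c : Vd d) (r : ℕ) (hr : Real.sqrt d ≤ r) :
    ((r:ℝ) - Real.sqrt d)^d * gconst d ≤ ((dball c r).card : ℝ) := by
  have h := vol_le_card_dball hd c r
  rw [volume_ball' hd _ _ (by linarith)] at h
  have h2 := ENNReal.toReal_mono (by simp) h
  rw [ENNReal.toReal_ofReal
    (mul_nonneg (pow_nonneg (by linarith) d) (gconst_pos d).le)] at h2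
  have h3 : ((((dball c r).card : ℕ) : ℝ≥0∞)).toReal = ((dball c r).card : ℝ) := rfl
  rw [h3] at h2
  exact h2

end Geometry

section Final
open Real

lemma pow_sub_pow_le' (m : ℕ) {a b : ℝ} (h0 : 0 ≤ b) (hba : b ≤ a) :
    a^(m+1) - b^(m+1) ≤ (m+1 : ℝ) * a^m * (a - b) := by
  induction m with
  | zero => simp
  | succ m ih =>
      have ha : 0 ≤ a := le_trans h0 hba
      have h1 : a * (a^(m+1) - b^(m+1)) ≤ a * ((m+1 : ℝ) * a^m * (a - b)) :=
        mul_le_mul_of_nonneg_left ih ha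
      have h2 : b^(m+1) * (a - b) ≤ a^(m+1) * (a - b) :=
        mul_le_mul_of_nonneg_right (pow_le_pow_left₀ h0 hba (m+1)) (by linarith)
      have e1 : a * (a^(m+1) - b^(m+1)) = a^(m+2) - a * b^(m+1) := by ring
      have e2 : b^(m+1) * (a - b) = a * b^(m+1) - b^(m+2) := by ring
      have e3 : a * ((m+1 : ℝ) * a^m * (a - b)) = (m+1 : ℝ) * a^(m+1) * (a - b) := by ring
      have e4 : ((m:ℝ) + 1 + 1) * a^(m+1) * (a - b) =
          (m+1 : ℝ) * a^(m+1) * (a - b) + a^(m+1) * (a - b) := by ring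
      have e5 : a^(m+1+1) = a^(m+2) := by ring
      have e6 : b^(m+1+1) = b^(m+2) := by ring
      push_cast
      linarith [h1, h2, e1, e2, e3, e4, e5, e6]

lemma sqrt_nat_le_self {d : ℕ} (hd : 0 < d) : Real.sqrt d ≤ d := by
  have h1 : ((d:ℝ)) ≤ ((d:ℝ))^2 := by
    nlinarith [show (1:ℝ) ≤ (d:ℝ) from by exact_mod_cast hd]
  calc Real.sqrt d ≤ Real.sqrt ((d:ℝ)^2) := Real.sqrt_le_sqrt h1
    _ = d := Real.sqrt_sq (by positivity)

/-- The main annulus-to-ball ratio bound for large `k`. -/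
lemma annulus_ratio (d : ℕ) (hd : 0 < d) (x : Vd d) (k : ℕ) (hk : 4*d + 4 < k) :
    ((dball x k).card : ℝ) - ((dball x (k-1)).card : ℝ) ≤
      (d * 2^(2*d) * (1 + 2*Real.sqrt d) / k) * (dball x k).card := by
  set g := gconst d with hg
  have hgpos := gconst_pos d
  have hsd : Real.sqrt d ≤ d := sqrt_nat_le_self hd
  have hsd0 : (0:ℝ) ≤ Real.sqrt d := Real.sqrt_nonneg _
  have hkR : (4*d + 4 : ℝ) < k := by exact_mod_cast hk
  have hdR : (1:ℝ) ≤ d := by exact_mod_cast hd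
  have hkpos : (0:ℝ) < k := by linarith
  set a : ℝ := k + Real.sqrt d with ha
  set b : ℝ := (k - 1) - Real.sqrt d with hb
  have hb0 : 0 ≤ b := by rw [hb]; linarith
  have hba : b ≤ a := by rw [ha, hb]; linarith
  have ha0 : 0 ≤ a := le_trans hb0 hba
  -- upper bound for the big ball
  have hub : ((dball x k).card : ℝ) ≤ a^d * g := card_dball_le_real hd x k
  -- lower bound for the small ball
  have hcast : (((k-1 : ℕ)) : ℝ) = (k:ℝ) - 1 := by
    have : (1:ℕ) ≤ k := by omega
    push_cast [this]
    ring
  have hlb' : b^d * g ≤ ((dball x (k-1)).card : ℝ) := by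
    have := card_dball_ge_real hd x (k-1) (by rw [hcast]; linarith)
    rw [hcast] at this
    exact this
  -- lower bound for the big ball
  have hlb : ((k:ℝ)/2)^d * g ≤ ((dball x k).card : ℝ) := by
    have h1 := card_dball_ge_real hd x k (by linarith)
    calc ((k:ℝ)/2)^d * g ≤ ((k:ℝ) - Real.sqrt d)^d * g := by
          gcongr
          linarith
      _ ≤ _ := h1
  -- the difference bound
  obtain ⟨m, hm⟩ : ∃ m, d = m + 1 := ⟨d - 1, by omega⟩
  have hdiff : a^d - b^d ≤ (d:ℝ) * a^(d-1) * (a - b) := by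
    rw [hm]
    have : (m+1) - 1 = m := by omega
    rw [this]
    exact_mod_cast pow_sub_pow_le' m hb0 hba
  have hab : a - b = 1 + 2*Real.sqrt d := by rw [ha, hb]; ring
  have hstep1 : ((dball x k).card : ℝ) - ((dball x (k-1)).card : ℝ) ≤
      (a^d - b^d) * g := by nlinarith [hub, hlb']
  have hstep2 : (a^d - b^d) * g ≤ ((d:ℝ) * a^(d-1) * (1 + 2*Real.sqrt d)) * g := by
    rw [← hab]
    exact mul_le_mul_of_nonneg_right hdiff hgpos.le
  have hapow : a^(d-1) ≤ (2*(k:ℝ))^(d-1) := by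
    apply pow_le_pow_left₀ ha0
    rw [ha]; linarith
  have hstep3 : ((d:ℝ) * a^(d-1) * (1 + 2*Real.sqrt d)) * g ≤
      ((d:ℝ) * (2*(k:ℝ))^(d-1) * (1 + 2*Real.sqrt d)) * g := by
    gcongr
  -- key comparison with the volume lower bound
  have hkey : ((d:ℝ) * (2*(k:ℝ))^(d-1) * (1 + 2*Real.sqrt d)) * g ≤
      (d * 2^(2*d) * (1 + 2*Real.sqrt d) / k) * (((k:ℝ)/2)^d * g) := by
    have e1 : (2*(k:ℝ))^(d-1) = 2^(d-1) * (k:ℝ)^(d-1) := mul_pow 2 _ _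
    have e2 : ((k:ℝ)/2)^d = (k:ℝ)^d / 2^d := div_pow _ _ _
    have e3 : (k:ℝ)^d = (k:ℝ) * (k:ℝ)^(d-1) := by
      rw [hm]
      have hmm : (m+1) - 1 = m := by omega
      rw [hmm, pow_succ]
      ring
    have hk0 : (k:ℝ) ≠ 0 := ne_of_gt hkpos
    have h2d : (2:ℝ)^(2*d) = 2^d * 2^d := by rw [two_mul, pow_add]
    have eR : ((d:ℝ) * 2^(2*d) * (1 + 2*Real.sqrt d) / k) * (((k:ℝ)/2)^d * g) =
        (d:ℝ) * 2^d * (1 + 2*Real.sqrt d) * (k:ℝ)^(d-1) * g := by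
      rw [h2d, e2, e3]
      field_simp
    rw [eR, e1]
    have h29 : (2:ℝ)^(d-1) ≤ 2^d := by
      apply pow_le_pow_right₀ (by norm_num)
      omega
    calc (d:ℝ) * (2^(d-1) * (k:ℝ)^(d-1)) * (1 + 2*Real.sqrt d) * g
        = (2:ℝ)^(d-1) * ((d:ℝ) * (k:ℝ)^(d-1) * (1 + 2*Real.sqrt d) * g) := by ring
      _ ≤ (2:ℝ)^d * ((d:ℝ) * (k:ℝ)^(d-1) * (1 + 2*Real.sqrt d) * g) :=
          mul_le_mul_of_nonneg_right h29 (by positivity)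
      _ = (d:ℝ) * 2^d * (1 + 2*Real.sqrt d) * (k:ℝ)^(d-1) * g := by ring
  have hfinal : (d * 2^(2*d) * (1 + 2*Real.sqrt d) / k) * (((k:ℝ)/2)^d * g) ≤
      (d * 2^(2*d) * (1 + 2*Real.sqrt d) / k) * (dball x k).card := by
    apply mul_le_mul_of_nonneg_left hlb
    positivity
  linarith

end Final


/-- Smoothing lemma: there is a constant `C = C(d)` such that for any rotor aggregation
with a simple mechanism, any `k > 1`, and any `x` whose lattice ball `B(x,k)` is contained
in `Rₙ ∖ {0}`, the smoothed odometer satisfies `|(1/2d)Δ(Sₖu)(x) − 1| ≤ C/k`. -/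
theorem smoothed_odometer_laplacian (d : ℕ) (hd : 0 < d) :
    ∃ C : ℝ, ∀ (n : ℕ) (mech : Vd d → ZMod (2 * d) → Fin d × Bool)
      (r₀ : Vd d → ZMod (2 * d)), SimpleMech mech →
      ∀ (E : RotorExec d n mech r₀) (k : ℕ), 1 < k →
      ∀ x : Vd d, (∀ y ∈ dball x k, y ∈ E.cluster ∧ y ≠ 0) →
      |(1 / (2 * d)) * lapd (Sk k (fun z => (E.u z : ℝ))) x - 1| ≤ C / k := by
  classical
  set C₁ : ℝ := 4 * d * (4*d + 4) with hC₁
  set Q : ℝ := (d:ℝ) * 2^(2*d) * (1 + 2*Real.sqrt d) with hQ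
  set C₂ : ℝ := 4 * d * Q with hC₂
  have hdRR : (1:ℝ) ≤ d := by exact_mod_cast hd
  have hsq0 : (0:ℝ) ≤ Real.sqrt d := Real.sqrt_nonneg _
  have hQ0 : 0 ≤ Q := by rw [hQ]; positivity
  have hC₁0 : 0 ≤ C₁ := by rw [hC₁]; positivity
  have hC₂0 : 0 ≤ C₂ := by rw [hC₂]; positivity
  refine ⟨C₁ + C₂, ?_⟩
  intro n mech r₀ hs E k hk x hball
  set B := dball x k with hB
  have hk0 : 0 < k := by omega
  have hcpos : 0 < B.card := dball_card_pos hk0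
  have hcR : (0:ℝ) < B.card := by exact_mod_cast hcpos
  have hkR : (0:ℝ) < k := by exact_mod_cast hk0
  have hd0 : ((d:ℝ)) ≠ 0 := by linarith
  have hc0 : ((B.card : ℕ) : ℝ) ≠ 0 := ne_of_gt hcR
  have hden : (0:ℝ) < 2*(d:ℝ)*B.card := by
    have : (0:ℝ) < 2*(d:ℝ) := by linarith
    exact mul_pos this hcR
  set S : ℤ := ∑ y ∈ B, ∑ j : Fin d × Bool, ((E.u (nbr y j) : ℤ) - E.u y) with hS
  have hlap : lapd (Sk k (fun z => (E.u z : ℝ))) x = (S : ℝ) / B.card := by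
    rw [lapd_Sk]
    congr 1
    rw [hS]
    push_cast
    rfl
  have h1 := E.sum_lap_bound hs hd x k hball
  have h2 := boundary_card_le (x := x) (k := k)
  have h3 := ann_card_eq (x := x) (k := k) (by omega)
  have hZ : |S - 2 * d * B.card| ≤
      8 * (d:ℤ)^2 * ((B.card : ℤ) - ((dball x (k-1)).card : ℤ)) := by
    have hd4 : (0:ℤ) ≤ 4 * d := by positivity
    nlinarith [h1, h2, h3]
  have hR : |(S:ℝ) - 2*d*B.card| ≤
      8*(d:ℝ)^2 * ((B.card:ℝ) - ((dball x (k-1)).card : ℝ)) := by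
    exact_mod_cast hZ
  have hexpr : (1 / (2 * (d:ℝ))) * ((S:ℝ)/B.card) - 1 =
      ((S:ℝ) - 2*d*B.card) / (2*d*B.card) := by
    field_simp
  rw [hlap, hexpr, abs_div, abs_of_pos hden]
  have hc'0 : (0:ℝ) ≤ ((dball x (k-1)).card : ℝ) := Nat.cast_nonneg _
  have hc'c : ((dball x (k-1)).card : ℝ) ≤ (B.card : ℝ) := by
    have h4 : (0:ℤ) ≤ ((B.card : ℤ) - ((dball x (k-1)).card : ℤ)) := by
      rw [← h3]
      positivity
    have h5 : ((dball x (k-1)).card : ℤ) ≤ (B.card : ℤ) := by linarith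
    exact_mod_cast h5
  by_cases hcase : k ≤ 4*d + 4
  · have hb1 : |(S:ℝ) - 2*d*B.card| / (2*(d:ℝ)*B.card) ≤ 4*(d:ℝ) := by
      rw [div_le_iff₀ hden]
      have h6 : (0:ℝ) ≤ 8*(d:ℝ)^2 * ((dball x (k-1)).card : ℝ) :=
        mul_nonneg (by positivity) hc'0
      nlinarith [hR]
    have hb2 : 4*(d:ℝ) ≤ C₁/k := by
      rw [le_div_iff₀ hkR, hC₁]
      have hkle : (k:ℝ) ≤ 4*(d:ℝ)+4 := by exact_mod_cast hcase
      have := mul_le_mul_of_nonneg_left hkle (by positivity : (0:ℝ) ≤ 4*(d:ℝ))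
      linarith
    have hb3 : (0:ℝ) ≤ C₂/k := div_nonneg hC₂0 hkR.le
    have hb4 : C₁/k + C₂/k = (C₁+C₂)/k := by rw [← add_div]
    linarith
  · push_neg at hcase
    have hratio := annulus_ratio d hd x k hcase
    have hb1 : |(S:ℝ) - 2*d*B.card| / (2*(d:ℝ)*B.card) ≤ C₂ / k := by
      rw [div_le_div_iff₀ hden hkR]
      have hr2 : ((B.card:ℝ) - ((dball x (k-1)).card : ℝ))*k ≤ Q * B.card := by
        have hmul := mul_le_mul_of_nonneg_right hratio hkR.le
        calc ((B.card:ℝ) - ((dball x (k-1)).card : ℝ))*k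
            ≤ ((Q / k) * B.card)*k := hmul
          _ = Q * B.card := by field_simp
      have e1 : |(S:ℝ) - 2*d*B.card| * k ≤
          (8*(d:ℝ)^2 * ((B.card:ℝ) - ((dball x (k-1)).card : ℝ))) * k :=
        mul_le_mul_of_nonneg_right hR hkR.le
      have e2 : (8*(d:ℝ)^2 * ((B.card:ℝ) - ((dball x (k-1)).card : ℝ))) * k =
          8*(d:ℝ)^2 * (((B.card:ℝ) - ((dball x (k-1)).card : ℝ))*k) := by ring
      have e3 : 8*(d:ℝ)^2 * (((B.card:ℝ) - ((dball x (k-1)).card : ℝ))*k) ≤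
          8*(d:ℝ)^2 * (Q * B.card) :=
        mul_le_mul_of_nonneg_left hr2 (by positivity)
      have e4 : C₂*(2*(d:ℝ)*B.card) = 8*(d:ℝ)^2*(Q*B.card) := by rw [hC₂]; ring
      linarith
    have hb3 : (0:ℝ) ≤ C₁/k := div_nonneg hC₁0 hkR.le
    have hb4 : C₁/k + C₂/k = (C₁+C₂)/k := by rw [← add_div]
    linarith
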